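/- In every multi-graph instance with n ≥ 2 agents whose valuations are all subadditive, there exists an orientation X with v_i(X_i) ≥ (1/2)·PMMS_i(X) for every agent i, i.e., a 1/2-PMMS orientation. -/

import Mathlib

open Finset

/-- A multi-graph fair-division instance: agents `V` (vertices), items `E` (edges of a
multi-graph on `V`), an endpoint map assigning to each item an unordered pair of agents
(self-loops allowed), and for each agent a nonnegative, normalized, monotone, graphical
valuation on sets of items. -/
structure GraphInstance (V E : Type) [DecidableEq E] where
  ep : E → Sym2 V
  val : V → Finset E → ℝ
  val_nonneg : ∀ i S, 0 ≤ val i S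
  val_empty : ∀ i, val i ∅ = 0
  val_mono : ∀ i ⦃S T : Finset E⦄, S ⊆ T → val i S ≤ val i T
  graphical : ∀ i e, i ∉ ep e → ∀ S : Finset E, val i (insert e S) = val i S

variable {V E : Type}

/-- `P` is a partition of `F` into `d` (possibly empty) parts. -/
def IsPartitionInto [DecidableEq E] (d : ℕ) (P : Fin d → Finset E) (F : Finset E) : Prop :=
  (∀ s t : Fin d, s ≠ t → Disjoint (P s) (P t)) ∧ Finset.univ.biUnion P = F

/-- The `1`-out-of-`d` maximin share value `μ^d(F)` of a valuation `v` on ground set `F`: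
the maximum, over all partitions of `F` into `d` (possibly empty) parts, of the minimum
value of a part. -/
noncomputable def mms [DecidableEq E] (v : Finset E → ℝ) (d : ℕ) (F : Finset E) : ℝ :=
  sSup {x | ∃ P : Fin d → Finset E, IsPartitionInto d P F ∧ x = ⨅ t, v (P t)}

/-- An allocation: a family of pairwise disjoint bundles. -/
def IsAllocation [DecidableEq E] (X : V → Finset E) : Prop :=
  ∀ i j : V, i ≠ j → Disjoint (X i) (X j)

/-- An orientation: an allocation in which every item is given to one of its endpoints. -/
def IsOrientation [DecidableEq E] (I : GraphInstance V E) (X : V → Finset E) : Prop :=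
  IsAllocation X ∧ ∀ e : E, ∃ i, i ∈ I.ep e ∧ e ∈ X i

/-- Additive valuation. -/
def IsAdditiveVal [DecidableEq E] (v : Finset E → ℝ) : Prop :=
  ∀ S : Finset E, v S = ∑ e ∈ S, v {e}

/-- XOS (fractionally subadditive) valuation: the pointwise maximum of finitely many
additive functions with nonnegative singleton values. -/
def IsXOSVal [DecidableEq E] (v : Finset E → ℝ) : Prop :=
  ∃ (A : Finset (E → ℝ)) (hA : A.Nonempty),
    (∀ a ∈ A, ∀ e, 0 ≤ a e) ∧
    ∀ S : Finset E, v S = A.sup' hA fun a => ∑ e ∈ S, a e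

/-- Subadditive valuation. -/
def IsSubadditiveVal [DecidableEq E] (v : Finset E → ℝ) : Prop :=
  ∀ S T : Finset E, v (S ∪ T) ≤ v S + v T

/-- The PMMS threshold of agent `i` under allocation `X`:
`PMMS_i(X) = max_{j ≠ i} μ_i^2(X_i ∪ X_j)`. -/
noncomputable def pmmsVal [DecidableEq E] (I : GraphInstance V E) (X : V → Finset E)
    (i : V) : ℝ :=
  sSup {x | ∃ j : V, j ≠ i ∧ x = mms (I.val i) 2 (X i ∪ X j)}

/-- A canonical 1-out-of-`d` MMS partition of the full ground set for valuation `v`: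
a partition into `d` parts whose minimum part value equals `μ^d`. -/
def IsCanonicalPartition [DecidableEq E] [Fintype E] (v : Finset E → ℝ) (d : ℕ)
    (B : Fin d → Finset E) : Prop :=
  IsPartitionInto d B Finset.univ ∧ (⨅ t, v (B t)) = mms v d Finset.univ


section Aux19

variable {E : Type} [DecidableEq E] {v : Finset E → ℝ}

lemma aux_part_subset {P : Fin 2 → Finset E} {F : Finset E}
    (h : IsPartitionInto 2 P F) (t : Fin 2) : P t ⊆ F := by
  intro e he
  rw [← h.2]
  exact Finset.mem_biUnion.2 ⟨t, Finset.mem_univ t, he⟩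

lemma aux_union_eq {P : Fin 2 → Finset E} {F : Finset E}
    (h : IsPartitionInto 2 P F) : P 0 ∪ P 1 = F := by
  rw [← h.2]
  ext e
  simp [Finset.mem_biUnion, Fin.exists_fin_two]

lemma aux_mk_partition {A B F : Finset E} (hd : Disjoint A B) (hu : A ∪ B = F) :
    IsPartitionInto 2 (fun t => if t = 0 then A else B) F := by
  constructor
  · intro s t hst
    fin_cases s <;> fin_cases t <;> simp_all <;>
      first
        | exact hd
        | exact hd.symm
  · ext e
    simp only [Finset.mem_biUnion, Finset.mem_univ, true_and, Fin.exists_fin_two, ← hu,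
      Finset.mem_union]
    simp

lemma aux_iInf_le (g : Fin 2 → ℝ) (t : Fin 2) : (⨅ s, g s) ≤ g t :=
  ciInf_le (Set.finite_range g).bddBelow t

lemma aux_le_mms (hm : ∀ ⦃S T : Finset E⦄, S ⊆ T → v S ≤ v T)
    {P : Fin 2 → Finset E} {F : Finset E} (h : IsPartitionInto 2 P F) :
    (⨅ t, v (P t)) ≤ mms v 2 F := by
  refine le_csSup ⟨v F, ?_⟩ ⟨P, h, rfl⟩
  rintro x ⟨Q, hQ, rfl⟩
  exact (aux_iInf_le _ 0).trans (hm (aux_part_subset hQ 0))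

lemma aux_mms_le {F : Finset E} {a : ℝ} (ha : 0 ≤ a)
    (h : ∀ P : Fin 2 → Finset E, IsPartitionInto 2 P F → (⨅ t, v (P t)) ≤ a) :
    mms v 2 F ≤ a :=
  Real.sSup_le (by rintro x ⟨P, hP, rfl⟩; exact h P hP) ha

lemma aux_mms_nonneg (h0 : ∀ S, 0 ≤ v S) (hm : ∀ ⦃S T : Finset E⦄, S ⊆ T → v S ≤ v T)
    (F : Finset E) : 0 ≤ mms v 2 F := by
  have hP : IsPartitionInto 2 (fun t : Fin 2 => if t = 0 then F else ∅) F :=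
    aux_mk_partition (by simp) (by simp)
  have h1 : (0 : ℝ) ≤ ⨅ t : Fin 2, v (if t = 0 then F else ∅) :=
    le_ciInf fun t => h0 _
  exact h1.trans (aux_le_mms hm hP)

lemma aux_mms_le_val (h0 : ∀ S, 0 ≤ v S) (hm : ∀ ⦃S T : Finset E⦄, S ⊆ T → v S ≤ v T)
    (F : Finset E) : mms v 2 F ≤ v F :=
  aux_mms_le (h0 F) fun _ hP => (aux_iInf_le _ 0).trans (hm (aux_part_subset hP 0))

lemma aux_mms_mono (h0 : ∀ S, 0 ≤ v S) (hm : ∀ ⦃S T : Finset E⦄, S ⊆ T → v S ≤ v T)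
    {F G : Finset E} (hFG : F ⊆ G) : mms v 2 F ≤ mms v 2 G := by
  refine aux_mms_le (aux_mms_nonneg h0 hm G) ?_
  intro P hP
  have hP' : IsPartitionInto 2 (fun t : Fin 2 => if t = 0 then P 0 ∪ (G \ F) else P 1) G := by
    apply aux_mk_partition
    · refine Finset.disjoint_union_left.2 ⟨hP.1 0 1 (by decide), ?_⟩
      exact Finset.sdiff_disjoint.mono_right (aux_part_subset hP 1)
    · rw [Finset.union_right_comm, aux_union_eq hP, Finset.union_sdiff_of_subset hFG]
  refine le_trans ?_ (aux_le_mms hm hP')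
  refine le_ciInf fun t => ?_
  fin_cases t
  · simpa using (aux_iInf_le (fun t => v (P t)) 0).trans (hm Finset.subset_union_left)
  · simpa using aux_iInf_le (fun t => v (P t)) 1

lemma aux_exists_max [Fintype E] (v : Finset E → ℝ) (F : Finset E) :
    ∃ P : Fin 2 → Finset E, IsPartitionInto 2 P F ∧
      ∀ Q : Fin 2 → Finset E, IsPartitionInto 2 Q F → (⨅ t, v (Q t)) ≤ (⨅ t, v (P t)) := by
  have hfin : {P : Fin 2 → Finset E | IsPartitionInto 2 P F}.Finite := Set.toFinite _
  have hne : {P : Fin 2 → Finset E | IsPartitionInto 2 P F}.Nonempty :=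
    ⟨_, aux_mk_partition (Finset.disjoint_empty_right F) (Finset.union_empty F)⟩
  obtain ⟨P, hP, hmax⟩ := Set.exists_max_image _ (fun P => ⨅ t, v (P t)) hfin hne
  exact ⟨P, hP, fun Q hQ => hmax Q hQ⟩

lemma aux_inf_sup_mem {α : Type*} [LinearOrder α] (s : Sym2 α) : s.inf ∈ s ∧ s.sup ∈ s := by
  induction s using Sym2.ind with
  | _ a b =>
    simp only [Sym2.inf_mk, Sym2.sup_mk, Sym2.mem_iff]
    constructor
    · rcases le_total a b with h | h
      · exact Or.inl (inf_eq_left.2 h)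
      · exact Or.inr (inf_eq_right.2 h)
    · rcases le_total a b with h | h
      · exact Or.inr (sup_eq_right.2 h)
      · exact Or.inl (sup_eq_left.2 h)

lemma aux_graphical {V : Type} [DecidableEq V] (I : GraphInstance V E) (i : V)
    [DecidablePred fun e : E => i ∈ I.ep e] (S : Finset E) :
    I.val i S = I.val i (S.filter fun e => i ∈ I.ep e) := by
  classical
  have key : ∀ T : Finset E, (∀ e ∈ T, i ∉ I.ep e) → ∀ A : Finset E,
      I.val i (A ∪ T) = I.val i A := by
    intro T
    induction T using Finset.induction_on with
    | empty => intro _ A; simp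
    | insert a s he ih =>
      intro hT A
      rw [Finset.union_insert, I.graphical i _ (hT _ (Finset.mem_insert_self _ _)),
        ih (fun e' he' => hT e' (Finset.mem_insert_of_mem he')) A]
  conv_lhs => rw [← Finset.filter_union_filter_not_eq (fun e => i ∈ I.ep e) S]
  exact key _ (fun e he => (Finset.mem_filter.1 he).2) _

lemma aux_stepA {V : Type} [DecidableEq V] (I : GraphInstance V E) (i : V)
    [DecidablePred fun e : E => i ∈ I.ep e]
    (hsub : IsSubadditiveVal (I.val i)) (A B : Finset E) :
    mms (I.val i) 2 (A ∪ B) ≤ I.val i A + mms (I.val i) 2 (B.filter fun e => i ∈ I.ep e) := by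
  classical
  refine aux_mms_le (add_nonneg (I.val_nonneg i A)
    (aux_mms_nonneg (I.val_nonneg i) (I.val_mono i) _)) ?_
  intro P hP
  have hQpart : IsPartitionInto 2 (fun t => P t ∩ (B.filter fun e => i ∈ I.ep e))
      (B.filter fun e => i ∈ I.ep e) := by
    constructor
    · intro s t hst
      exact (hP.1 s t hst).mono Finset.inter_subset_left Finset.inter_subset_left
    · ext e
      simp only [Finset.mem_biUnion, Finset.mem_univ, true_and, Fin.exists_fin_two,
        Finset.mem_inter]
      constructor
      · rintro (⟨_, h⟩ | ⟨_, h⟩) <;> exact h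
      · intro heF
        have heB : e ∈ B := (Finset.mem_filter.1 heF).1
        have : e ∈ P 0 ∪ P 1 := by
          rw [aux_union_eq hP]; exact Finset.mem_union_right _ heB
        rcases Finset.mem_union.1 this with h | h
        · exact Or.inl ⟨h, heF⟩
        · exact Or.inr ⟨h, heF⟩
  have key : ∀ t, (⨅ s, I.val i (P s)) ≤ I.val i A
      + I.val i (P t ∩ (B.filter fun e => i ∈ I.ep e)) := by
    intro t
    have h1 : (⨅ s, I.val i (P s)) ≤ I.val i (P t) := aux_iInf_le _ t
    have h2 : I.val i (P t) ≤ I.val i (P t \ A) + I.val i (P t ∩ A) := by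
      conv_lhs => rw [← Finset.sdiff_union_inter (P t) A]
      exact hsub _ _
    have h3 : I.val i (P t ∩ A) ≤ I.val i A := I.val_mono i Finset.inter_subset_right
    have h4 : I.val i (P t \ A) ≤ I.val i (P t ∩ (B.filter fun e => i ∈ I.ep e)) := by
      rw [aux_graphical I i (P t \ A)]
      apply I.val_mono i
      intro e he
      have h5 := Finset.mem_filter.1 he
      have h6 := Finset.mem_sdiff.1 h5.1
      have heAB : e ∈ A ∪ B := aux_part_subset hP t h6.1
      have heB : e ∈ B := (Finset.mem_union.1 heAB).resolve_left h6.2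
      exact Finset.mem_inter.2 ⟨h6.1, Finset.mem_filter.2 ⟨heB, h5.2⟩⟩
    linarith
  have hle : (⨅ s, I.val i (P s)) - I.val i A
      ≤ ⨅ t, I.val i (P t ∩ (B.filter fun e => i ∈ I.ep e)) :=
    le_ciInf fun t => by linarith [key t]
  have hm := aux_le_mms (I.val_mono i) hQpart
  linarith

end Aux19

/-- In every multi-graph instance with `n ≥ 2` subadditive agents,
there exists an orientation `X` with `v_i(X_i) ≥ (1/2)·PMMS_i(X)` for every agent `i`,
i.e., a `1/2`-PMMS orientation. -/
theorem stmt19 {n : ℕ} (hn : 2 ≤ n) {E : Type} [Fintype E] [DecidableEq E]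
    (I : GraphInstance (Fin n) E) (hsub : ∀ i, IsSubadditiveVal (I.val i)) :
    ∃ X : Fin n → Finset E, IsOrientation I X ∧
      ∀ i, (1 / 2 : ℝ) * pmmsVal I X i ≤ I.val i (X i) := by
  classical
  set Ep : Fin n → Fin n → Finset E := fun a b => Finset.univ.filter fun e => I.ep e = s(a, b)
    with hEpdef
  choose P hPpart hPmax using fun a b : Fin n => aux_exists_max (I.val a) (Ep a b)
  set chosen : Fin n → Fin n → Finset E := fun a b =>
    if I.val b (P a b 1) ≤ I.val b (P a b 0) then P a b 0 else P a b 1 with hchdef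
  set owner : E → Fin n := fun e =>
    if e ∈ chosen (I.ep e).inf (I.ep e).sup then (I.ep e).sup else (I.ep e).inf with howdef
  set X : Fin n → Finset E := fun i => Finset.univ.filter fun e => owner e = i with hXdef
  have hXmem : ∀ e i, e ∈ X i ↔ owner e = i := by
    intro e i; rw [hXdef]; simp
  have howner_mem : ∀ e, owner e ∈ I.ep e := by
    intro e
    rw [howdef]
    dsimp only
    split
    · exact (aux_inf_sup_mem (I.ep e)).2
    · exact (aux_inf_sup_mem (I.ep e)).1
  have hEpsub : ∀ a b, chosen a b ⊆ Ep a b := by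
    intro a b
    rw [hchdef]
    dsimp only
    split
    · exact aux_part_subset (hPpart a b) 0
    · exact aux_part_subset (hPpart a b) 1
  have hcompl : ∀ a b, I.val b (Ep a b \ chosen a b) ≤ I.val b (chosen a b) := by
    intro a b
    have hu := aux_union_eq (hPpart a b)
    have hd := (hPpart a b).1 0 1 (by decide)
    rw [hchdef]
    dsimp only
    split_ifs with h
    · rw [← hu, Finset.union_sdiff_cancel_left hd]
      exact h
    · rw [← hu, Finset.union_sdiff_cancel_right hd]
      exact le_of_not_ge h
  have howner_pair : ∀ i j : Fin n, i < j → ∀ e ∈ Ep i j,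
      owner e = if e ∈ chosen i j then j else i := by
    intro i j hij e he
    have hep : I.ep e = s(i, j) := by
      rw [hEpdef] at he
      exact (Finset.mem_filter.1 he).2
    rw [howdef]
    dsimp only
    rw [hep, Sym2.inf_mk, Sym2.sup_mk, inf_eq_left.2 hij.le, sup_eq_right.2 hij.le]
  refine ⟨X, ⟨?_, ?_⟩, ?_⟩
  · intro i j hij
    rw [Finset.disjoint_left]
    intro e he1 he2
    rw [hXmem] at he1 he2
    exact hij (he1.symm.trans he2)
  · intro e
    exact ⟨owner e, howner_mem e, (hXmem e _).2 rfl⟩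
  intro i
  have h2v : (0 : ℝ) ≤ I.val i (X i) := I.val_nonneg i _
  have hb : pmmsVal I X i ≤ 2 * I.val i (X i) := by
    refine Real.sSup_le ?_ (by linarith)
    rintro x ⟨j, hji, rfl⟩
    have hij : i ≠ j := fun h => hji h.symm
    have hA : mms (I.val i) 2 (X i ∪ X j)
        ≤ I.val i (X i) + mms (I.val i) 2 ((X j).filter fun e => i ∈ I.ep e) :=
      aux_stepA I i (hsub i) (X i) (X j)
    have hFmem : ∀ e, e ∈ (X j).filter (fun e => i ∈ I.ep e) ↔ owner e = j ∧ i ∈ I.ep e := by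
      intro e
      constructor
      · intro h
        exact ⟨(hXmem e j).1 (Finset.mem_filter.1 h).1, (Finset.mem_filter.1 h).2⟩
      · rintro ⟨h1, h2⟩
        exact Finset.mem_filter.2 ⟨(hXmem e j).2 h1, h2⟩
    have hepF : ∀ e ∈ (X j).filter (fun e => i ∈ I.ep e), I.ep e = s(i, j) := by
      intro e he
      obtain ⟨hoj, hii⟩ := (hFmem e).1 he
      have hjj : j ∈ I.ep e := hoj ▸ howner_mem e
      exact (Sym2.mem_and_mem_iff hij).1 ⟨hii, hjj⟩
    have hFB : mms (I.val i) 2 ((X j).filter fun e => i ∈ I.ep e) ≤ I.val i (X i) := by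
      rcases lt_or_gt_of_ne hij with hlt | hgt
      · -- i < j : i is the cutter
        have hFsub : ((X j).filter fun e => i ∈ I.ep e) ⊆ chosen i j := by
          intro e he
          have hep := hepF e he
          have hmemEp : e ∈ Ep i j := by
            rw [hEpdef]
            exact Finset.mem_filter.2 ⟨Finset.mem_univ e, hep⟩
          have hown := howner_pair i j hlt e hmemEp
          by_contra hnc
          rw [if_neg hnc] at hown
          exact hij (hown.symm.trans ((hFmem e).1 he).1)
        calc mms (I.val i) 2 ((X j).filter fun e => i ∈ I.ep e)
            ≤ mms (I.val i) 2 (Ep i j) :=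
              aux_mms_mono (I.val_nonneg i) (I.val_mono i) (hFsub.trans (hEpsub i j))
          _ ≤ ⨅ t, I.val i (P i j t) :=
              aux_mms_le (le_ciInf fun t => I.val_nonneg i _) (fun Q hQ => hPmax i j Q hQ)
          _ ≤ I.val i (Ep i j \ chosen i j) := by
              rw [hchdef]
              dsimp only
              split_ifs with h
              · rw [← aux_union_eq (hPpart i j),
                  Finset.union_sdiff_cancel_left ((hPpart i j).1 0 1 (by decide))]
                exact aux_iInf_le _ 1
              · rw [← aux_union_eq (hPpart i j),
                  Finset.union_sdiff_cancel_right ((hPpart i j).1 0 1 (by decide))]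
                exact aux_iInf_le _ 0
          _ ≤ I.val i (X i) := by
              apply I.val_mono i
              intro e he
              obtain ⟨heEp, henc⟩ := Finset.mem_sdiff.1 he
              have hown := howner_pair i j hlt e heEp
              rw [if_neg henc] at hown
              exact (hXmem e i).2 hown
      · -- j < i : i is the chooser
        have hFsub : ((X j).filter fun e => i ∈ I.ep e) ⊆ Ep j i \ chosen j i := by
          intro e he
          have hep' : I.ep e = s(j, i) := (hepF e he).trans (Sym2.eq_swap)
          have hmemEp : e ∈ Ep j i := by
            rw [hEpdef]
            exact Finset.mem_filter.2 ⟨Finset.mem_univ e, hep'⟩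
          have hoj := ((hFmem e).1 he).1
          have hown := howner_pair j i hgt e hmemEp
          refine Finset.mem_sdiff.2 ⟨hmemEp, fun hc => ?_⟩
          rw [if_pos hc] at hown
          exact hij (hown.symm.trans hoj)
        have hchsub : chosen j i ⊆ X i := by
          intro e he
          have heEp := hEpsub j i he
          have hown := howner_pair j i hgt e heEp
          rw [if_pos he] at hown
          exact (hXmem e i).2 hown
        calc mms (I.val i) 2 ((X j).filter fun e => i ∈ I.ep e)
            ≤ I.val i ((X j).filter fun e => i ∈ I.ep e) :=
              aux_mms_le_val (I.val_nonneg i) (I.val_mono i) _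
          _ ≤ I.val i (Ep j i \ chosen j i) := I.val_mono i hFsub
          _ ≤ I.val i (chosen j i) := hcompl j i
          _ ≤ I.val i (X i) := I.val_mono i hchsub
    linarith
  linarith
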